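/- Define Ψ_ξ : C(X_{Ã}, ℤ) → C(X_A, ℤ) by Ψ_ξ(𝔣)(x) = 𝔣(ξ(x)) + 𝔣(σ_{Ã}(ξ(x))) if x₁ = 1 and Ψ_ξ(𝔣)(x) = 𝔣(ξ(x)) otherwise, and Ψ_η : C(X_A, ℤ) → C(X_{Ã}, ℤ) by Ψ_η(f)(x̃) = 0 if x̃₁ = 0 and Ψ_η(f)(x̃) = f(η(x̃)) otherwise. Then (Ψ_ξ ∘ Ψ_η)(f) = f for all f ∈ C(X_A, ℤ). -/

import Mathlib

/-- One-sided shift space over symbols `{1, …, N}`. -/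
def ShiftSpace (N : ℕ) (A : ℕ → ℕ → ℕ) : Set (ℕ → ℕ) :=
  {x | (∀ n, 1 ≤ x n ∧ x n ≤ N) ∧ ∀ n, A (x n) (x (n + 1)) = 1}

/-- One-sided shift space over symbols `{0, 1, …, N}`. -/
def ShiftSpace0 (N : ℕ) (A : ℕ → ℕ → ℕ) : Set (ℕ → ℕ) :=
  {x | (∀ n, x n ≤ N) ∧ ∀ n, A (x n) (x (n + 1)) = 1}

/-- The shift on raw sequences. -/
def rawShift (x : ℕ → ℕ) : ℕ → ℕ := fun n => x (n + 1)

/-- The expansion `Ã` of the matrix `A` at the vertex `1`, over the symbol set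
`{0, 1, …, N}`: `Ã(1,0) = 1`, `Ã(1,j) = 0` for `j ≥ 1`; `Ã(0,0) = 0`,
`Ã(0,j) = A(1,j)` for `j ≥ 1`; `Ã(i,0) = 0`, `Ã(i,j) = A(i,j)` for `i ≥ 2`. -/
def expandAt1 (A : ℕ → ℕ → ℕ) : ℕ → ℕ → ℕ := fun i j =>
  if i = 1 then (if j = 0 then 1 else 0)
  else if i = 0 then (if j = 0 then 0 else A 1 j)
  else if j = 0 then 0 else A i j

/-- The position in `ξ(x)` of the `n`-th letter of `x`, where `ξ` replaces
every symbol `1` by the word `(1,0)`. -/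
def posf (x : ℕ → ℕ) : ℕ → ℕ
  | 0 => 0
  | n + 1 => posf x n + (if x n = 1 then 2 else 1)

/-- The map `ξ : X_A → X_Ã` replacing every occurrence of the symbol `1`
by the word `(1,0)`. -/
noncomputable def xiMap (x : ℕ → ℕ) : ℕ → ℕ := fun m =>
  letI := Classical.dec (∃ n, posf x n = m)
  if h : ∃ n, posf x n = m then x h.choose else 0

/-- The map `η : X_Ã → X_A` deleting every occurrence of the symbol `0`. -/
noncomputable def etaMap (x : ℕ → ℕ) : ℕ → ℕ := fun m =>
  x (Nat.nth (fun i => x i ≠ 0) m)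

/-- The map `Ψ_ξ : C(X_Ã, ℤ) → C(X_A, ℤ)`. -/
noncomputable def PsiXi (f : (ℕ → ℕ) → ℤ) : (ℕ → ℕ) → ℤ := fun x =>
  if x 0 = 1 then f (xiMap x) + f (rawShift (xiMap x)) else f (xiMap x)

/-- The map `Ψ_η : C(X_A, ℤ) → C(X_Ã, ℤ)`. -/
noncomputable def PsiEta (f : (ℕ → ℕ) → ℤ) : (ℕ → ℕ) → ℤ := fun x =>
  if x 0 = 0 then 0 else f (etaMap x)

lemma posf_strictMono (x : ℕ → ℕ) : StrictMono (posf x) := by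
  apply strictMono_nat_of_lt_succ
  intro n
  simp only [posf]
  split <;> omega

lemma xiMap_posf (x : ℕ → ℕ) (n : ℕ) : xiMap x (posf x n) = x n := by
  unfold xiMap
  have h : ∃ m, posf x m = posf x n := ⟨n, rfl⟩
  rw [dif_pos h]
  exact congrArg x ((posf_strictMono x).injective h.choose_spec)

lemma xiMap_of_not (x : ℕ → ℕ) (m : ℕ) (h : ¬ ∃ n, posf x n = m) : xiMap x m = 0 := by
  unfold xiMap
  rw [dif_neg h]

lemma xiMap_ne_zero_iff (x : ℕ → ℕ) (hx : ∀ n, 1 ≤ x n) (m : ℕ) :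
    xiMap x m ≠ 0 ↔ ∃ n, posf x n = m := by
  constructor
  · intro h
    by_contra hc
    exact h (xiMap_of_not x m hc)
  · rintro ⟨n, rfl⟩
    rw [xiMap_posf]
    exact Nat.one_le_iff_ne_zero.mp (hx n)

lemma nth_eq_posf (x : ℕ → ℕ) (hx : ∀ n, 1 ≤ x n) (m : ℕ) :
    Nat.nth (fun i => xiMap x i ≠ 0) m = posf x m := by
  set p : ℕ → Prop := fun i => xiMap x i ≠ 0 with hp
  have hset : setOf p = Set.range (posf x) := by
    ext i
    simp only [Set.mem_setOf_eq, Set.mem_range, hp]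
    exact xiMap_ne_zero_iff x hx i
  have hinf : (setOf p).Infinite := by
    rw [hset]
    exact Set.infinite_range_of_injective (posf_strictMono x).injective
  induction m using Nat.strong_induction_on with
  | _ m ih =>
    have hl := Nat.isLeast_nth_of_infinite hinf m
    have hmem : p (posf x m) ∧ ∀ k < m, Nat.nth p k < posf x m := by
      constructor
      · show posf x m ∈ setOf p; rw [hset]; exact ⟨m, rfl⟩
      · intro k hk
        rw [ih k hk]
        exact posf_strictMono x hk
    refine le_antisymm (hl.2 hmem) ?_
    obtain ⟨hp1, hp2⟩ := hl.1
    have : Nat.nth p m ∈ setOf p := hp1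
    rw [hset] at this
    obtain ⟨n, hn⟩ := this
    rw [← hn]
    apply (posf_strictMono x).monotone
    by_contra hnm
    push_neg at hnm
    have h2 := hp2 n hnm
    rw [ih n hnm, hn] at h2
    exact lt_irrefl _ h2

lemma etaMap_xiMap (x : ℕ → ℕ) (hx : ∀ n, 1 ≤ x n) : etaMap (xiMap x) = x := by
  funext m
  unfold etaMap
  rw [nth_eq_posf x hx m, xiMap_posf]

theorem PsiXi_PsiEta (N : ℕ) (A : ℕ → ℕ → ℕ)
    (f : (ℕ → ℕ) → ℤ) (hf : ContinuousOn f (ShiftSpace N A)) :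
    ∀ x ∈ ShiftSpace N A, PsiXi (PsiEta f) x = f x := by
  rintro x ⟨hx1, -⟩
  have hx1' : ∀ n, 1 ≤ x n := fun n => (hx1 n).1
  have hxi0 : xiMap x 0 = x 0 := by
    have h := xiMap_posf x 0
    simpa [posf] using h
  have hne : ¬ (x 0 = 0) := by
    have := hx1' 0
    omega
  unfold PsiXi PsiEta
  by_cases h1 : x 0 = 1
  · rw [hxi0, if_pos h1]
    have h1' : xiMap x 1 = 0 := by
      apply xiMap_of_not
      rintro ⟨n, hn⟩
      match n with
      | 0 => simp [posf] at hn
      | n + 1 =>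
        have h2 : posf x 1 = 2 := by simp [posf, h1]
        have h3 : posf x 1 ≤ posf x (n + 1) :=
          (posf_strictMono x).monotone (Nat.succ_le_succ (Nat.zero_le n))
        omega
    have hsh : rawShift (xiMap x) 0 = 0 := h1'
    rw [if_neg hne, if_pos hsh, etaMap_xiMap x hx1', add_zero]
  · rw [hxi0, if_neg h1, if_neg hne, etaMap_xiMap x hx1']
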